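/- The independent lower bound: the total distance of any feasible TTP-2 schedule for n teams is at least LB = 2·D_G + n·D_M. -/

import Mathlib

open Finset

/-- Feasibility of a TTP-2 schedule given by opponent and home/away functions. -/
def ttpFeasible (n : ℕ) (opp : Fin (2*(n-1)) → Fin n → Fin n)
    (loc : Fin (2*(n-1)) → Fin n → Bool) : Prop :=
  (∀ d i, opp d i ≠ i) ∧
  (∀ d i, opp d (opp d i) = i) ∧
  (∀ d i, loc d (opp d i) = !(loc d i)) ∧
  (∀ i j : Fin n, i ≠ j → ∃! d : Fin (2*(n-1)), opp d i = j ∧ loc d i = false) ∧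
  (∀ (d : ℕ) (hd : d + 1 < 2*(n-1)) (i : Fin n),
      opp ⟨d+1, hd⟩ i ≠ opp ⟨d, by omega⟩ i) ∧
  (∀ (d : ℕ) (hd : d + 2 < 2*(n-1)) (i : Fin n),
      ¬(loc ⟨d+1, by omega⟩ i = loc ⟨d, by omega⟩ i ∧
        loc ⟨d+2, hd⟩ i = loc ⟨d+1, by omega⟩ i))

/-- The venue of team `i` on day `d` (days indexed by naturals; out-of-range
days, which never occur below, default to home). -/
def ttpVen (n : ℕ) (opp : Fin (2*(n-1)) → Fin n → Fin n)
    (loc : Fin (2*(n-1)) → Fin n → Bool) (d : ℕ) (i : Fin n) : Fin n :=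
  if h : d < 2*(n-1) then (if loc ⟨d, h⟩ i then i else opp ⟨d, h⟩ i) else i

/-- The travel distance of team `i` in a schedule. -/
noncomputable def ttpTravel (n : ℕ) (D : Fin n → Fin n → ℝ)
    (opp : Fin (2*(n-1)) → Fin n → Fin n)
    (loc : Fin (2*(n-1)) → Fin n → Bool) (i : Fin n) : ℝ :=
  D i (ttpVen n opp loc 0 i)
  + ∑ d ∈ Finset.range (2*(n-1) - 1),
      D (ttpVen n opp loc d i) (ttpVen n opp loc (d+1) i)
  + D (ttpVen n opp loc (2*(n-1) - 1) i) i

/-- The total distance of a schedule. -/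
noncomputable def ttpTotal (n : ℕ) (D : Fin n → Fin n → ℝ)
    (opp : Fin (2*(n-1)) → Fin n → Fin n)
    (loc : Fin (2*(n-1)) → Fin n → Bool) : ℝ :=
  ∑ i : Fin n, ttpTravel n D opp loc i

/-- A pairing (perfect matching) of the `n` teams: a family of blocks of size 2
covering every team exactly once. -/
def isPairing (n : ℕ) (M : Finset (Finset (Fin n))) : Prop :=
  (∀ e ∈ M, e.card = 2) ∧ (∀ i : Fin n, ∃! e, e ∈ M ∧ i ∈ e)

/-- The weight `D a b` of a block `{a, b}` (written symmetrically). -/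
noncomputable def blockWeight (n : ℕ) (D : Fin n → Fin n → ℝ)
    (f : Finset (Fin n)) : ℝ :=
  (∑ a ∈ f, ∑ b ∈ f, D a b) / 2

/-- The weight of a pairing: the sum of `D a b` over its blocks `{a, b}`. -/
noncomputable def pairingWeight (n : ℕ) (D : Fin n → Fin n → ℝ)
    (M : Finset (Finset (Fin n))) : ℝ :=
  ∑ e ∈ M, blockWeight n D e

/-- `D_G`: the sum of `D i j` over all unordered pairs of distinct teams. -/
noncomputable def sumDG (n : ℕ) (D : Fin n → Fin n → ℝ) : ℝ :=
  (∑ i : Fin n, ∑ j ∈ Finset.univ.erase i, D i j) / 2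

/-- `D_i`: the sum of `D i j` over all `j ≠ i`. -/
noncomputable def sumDi (n : ℕ) (D : Fin n → Fin n → ℝ) (i : Fin n) : ℝ :=
  ∑ j ∈ Finset.univ.erase i, D i j

/-- The distance matrix axioms: zero diagonal, nonnegativity, symmetry and the
triangle inequality. -/
def isMetric (n : ℕ) (D : Fin n → Fin n → ℝ) : Prop :=
  (∀ i, D i i = 0) ∧ (∀ i j, 0 ≤ D i j) ∧ (∀ i j, D i j = D j i) ∧
  (∀ i j h, D i j ≤ D i h + D h j)

/-- A TTP-2 itinerary pattern for team `i`: a partition of the set of the other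
teams into blocks of size 1 or 2. -/
def isPattern (n : ℕ) (i : Fin n) (P : Finset (Finset (Fin n))) : Prop :=
  (∀ e ∈ P, e.card = 1 ∨ e.card = 2) ∧
  (∀ e ∈ P, i ∉ e) ∧
  (∀ j : Fin n, j ≠ i → ∃! e, e ∈ P ∧ j ∈ e)

/-- The cost of an itinerary pattern: `2 * D i a` for a singleton block `{a}`,
and `D i a + D a b + D b i` for a block `{a, b}` of size 2. -/
noncomputable def patternCost (n : ℕ) (D : Fin n → Fin n → ℝ) (i : Fin n)
    (P : Finset (Finset (Fin n))) : ℝ :=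
  ∑ e ∈ P, ((∑ a ∈ e, D i a) +
    if e.card = 1 then ∑ a ∈ e, D i a else blockWeight n D e)

/-- `D(e, f)`: the sum of `D a b` over `a ∈ e` and `b ∈ f`. -/
noncomputable def crossDist (n : ℕ) (D : Fin n → Fin n → ℝ)
    (e f : Finset (Fin n)) : ℝ :=
  ∑ a ∈ e, ∑ b ∈ f, D a b

section Helpers

variable {α : Type*} [DecidableEq α]

lemma uniq_blocks_eq {P : Finset (Finset α)} {e f : Finset α} {x : α}
    (he : e ∈ P) (hf : f ∈ P) (hxe : x ∈ e) (hxf : x ∈ f)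
    (H : ∃! g, g ∈ P ∧ x ∈ g) : e = f := by
  obtain ⟨g, -, hg⟩ := H
  rw [hg e ⟨he, hxe⟩, hg f ⟨hf, hxf⟩]

lemma pairUp : ∀ (A : Finset α), Even A.card → ∃ Q : Finset (Finset α),
    (∀ e ∈ Q, e.card = 2) ∧ (∀ e ∈ Q, e ⊆ A) ∧ (∀ a ∈ A, ∃! e, e ∈ Q ∧ a ∈ e) := by
  intro A
  induction A using Finset.strongInduction with
  | _ A ih =>
    intro hA
    rcases A.eq_empty_or_nonempty with rfl | hA'
    · exact ⟨∅, by simp, by simp, by simp⟩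
    · have h2 : 2 ≤ A.card := by
        rcases hA with ⟨k, hk⟩
        have h0 : 0 < A.card := Finset.Nonempty.card_pos hA'
        omega
      obtain ⟨a, ha, b, hbA, hab⟩ := Finset.one_lt_card.mp (by omega : 1 < A.card)
      set B := A \ {a, b} with hB
      have hBss : B ⊂ A := by
        refine Finset.ssubset_iff_of_subset (Finset.sdiff_subset) |>.mpr ⟨a, ha, by simp [hB]⟩
      have hBcard : B.card = A.card - 2 := by
        rw [hB, Finset.card_sdiff_of_subset (by intro x hx; simp at hx; rcases hx with rfl | rfl <;> assumption)]
        simp [Finset.card_insert_of_notMem, hab]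
      have hBeven : Even B.card := by
        rcases hA with ⟨k, hk⟩; rw [hBcard]; exact ⟨k - 1, by omega⟩
      obtain ⟨Q, hQ2, hQss, hQuniq⟩ := ih B hBss hBeven
      refine ⟨insert {a, b} Q, ?_, ?_, ?_⟩
      · intro e he
        rcases Finset.mem_insert.mp he with rfl | he
        · exact Finset.card_pair hab
        · exact hQ2 e he
      · intro e he
        rcases Finset.mem_insert.mp he with rfl | he
        · intro x hx; simp at hx; rcases hx with rfl | rfl <;> assumption
        · exact (hQss e he).trans Finset.sdiff_subset
      · intro x hx
        by_cases hxab : x = a ∨ x = b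
        · refine ⟨{a, b}, ⟨Finset.mem_insert_self _ _, by simp [hxab]⟩, ?_⟩
          rintro e ⟨he, hxe⟩
          rcases Finset.mem_insert.mp he with rfl | he
          · rfl
          · exact absurd ((hQss e he) hxe) (by simp [hB, hxab])
        · push_neg at hxab
          have hxB : x ∈ B := by simp [hB, hxab.1, hxab.2, hx]
          obtain ⟨e, ⟨heQ, hxe⟩, heuniq⟩ := hQuniq x hxB
          refine ⟨e, ⟨Finset.mem_insert_of_mem heQ, hxe⟩, ?_⟩
          rintro f ⟨hf, hxf⟩
          rcases Finset.mem_insert.mp hf with rfl | hf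
          · exfalso; simp at hxf; rcases hxf with rfl | rfl
            · exact hxab.1 rfl
            · exact hxab.2 rfl
          · exact heuniq f ⟨hf, hxf⟩

end Helpers
section Part2

lemma blockWeight_pair {n : ℕ} (D : Fin n → Fin n → ℝ)
    (hzero : ∀ i, D i i = 0) (hsym : ∀ i j, D i j = D j i) {x y : Fin n} (hxy : x ≠ y) :
    blockWeight n D {x, y} = D x y := by
  rw [blockWeight, Finset.sum_pair hxy, Finset.sum_pair hxy, Finset.sum_pair hxy,
    hzero, hzero, hsym y x]
  ring

lemma exists_pairing_le (n : ℕ) (hne : Even n) (D : Fin n → Fin n → ℝ)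
    (hD : isMetric n D) (i : Fin n) (P : Finset (Finset (Fin n))) (hP : isPattern n i P) :
    ∃ M' : Finset (Finset (Fin n)), isPairing n M' ∧
      sumDi n D i + pairingWeight n D M' ≤ patternCost n D i P := by
  obtain ⟨hcard, hnotin, huniq⟩ := hP
  obtain ⟨hzero, hnonneg, hsym, htri⟩ := hD
  classical
  set P1 := P.filter (fun e => e.card = 1) with hP1def
  set P2 := P.filter (fun e => ¬ e.card = 1) with hP2def
  have hP2card : ∀ e ∈ P2, e.card = 2 := by
    intro e he
    rcases Finset.mem_filter.mp he with ⟨heP, h1⟩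
    rcases hcard e heP with h | h
    · exact absurd h h1
    · exact h
  -- blocks of P are pairwise disjoint
  have hdisj : (↑P : Set (Finset (Fin n))).PairwiseDisjoint id := by
    intro e he f hf hef
    simp only [Function.onFun, id]
    rw [Finset.disjoint_left]
    intro x hxe hxf
    have hxi : x ≠ i := fun h => hnotin e (Finset.mem_coe.mp he) (h ▸ hxe)
    exact hef (uniq_blocks_eq (Finset.mem_coe.mp he) (Finset.mem_coe.mp hf) hxe hxf
      (huniq x hxi))
  have hunion : P.biUnion id = Finset.univ.erase i := by
    ext j
    simp only [Finset.mem_biUnion, Finset.mem_erase, Finset.mem_univ, and_true, id]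
    constructor
    · rintro ⟨e, he, hje⟩
      exact fun h => hnotin e he (h ▸ hje)
    · intro hj
      obtain ⟨e, ⟨he, hje⟩, -⟩ := huniq j hj
      exact ⟨e, he, hje⟩
  have h1 : ∑ e ∈ P, ∑ a ∈ e, D i a = sumDi n D i := by
    rw [sumDi, ← hunion, Finset.sum_biUnion hdisj]
    rfl
  have hsplit : patternCost n D i P
      = sumDi n D i + ((∑ e ∈ P1, ∑ a ∈ e, D i a) + ∑ e ∈ P2, blockWeight n D e) := by
    rw [patternCost, Finset.sum_add_distrib, h1]
    congr 1
    rw [← Finset.sum_filter_add_sum_filter_not P (fun e => e.card = 1)]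
    congr 1
    · exact Finset.sum_congr rfl fun e he => if_pos (Finset.mem_filter.mp he).2
    · exact Finset.sum_congr rfl fun e he => if_neg (Finset.mem_filter.mp he).2
  -- the set to pair up
  set A : Finset (Fin n) := insert i (P1.biUnion id) with hAdef
  have hmemA : ∀ x, x ∈ A ↔ x = i ∨ ∃ e ∈ P1, x ∈ e := by
    intro x; simp [hAdef]
  have hiP1 : i ∉ P1.biUnion id := by
    simp only [Finset.mem_biUnion, id, not_exists, not_and]
    intro e he
    exact hnotin e (Finset.mem_of_mem_filter e he)
  have hdisj1 : ∀ e ∈ P1, ∀ f ∈ P1, e ≠ f → Disjoint e f := by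
    intro e he f hf hef
    exact hdisj (Finset.mem_coe.mpr (Finset.mem_of_mem_filter e he))
      (Finset.mem_coe.mpr (Finset.mem_of_mem_filter f hf)) hef
  have e1 : ∑ e ∈ P1, e.card = P1.card := by
    rw [Finset.sum_congr rfl (fun e he => (Finset.mem_filter.mp he).2)]
    simp
    rfl
  have e2 : ∑ e ∈ P2, e.card = 2 * P2.card := by
    rw [Finset.sum_congr rfl hP2card]
    simp [mul_comm]
  have hcardP : (n - 1 : ℕ) = P1.card + 2 * P2.card := by
    have hbu := Finset.card_biUnion (t := id) hdisj
    rw [hunion] at hbu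
    have hcc : (Finset.univ.erase i).card = n - 1 := by
      rw [Finset.card_erase_of_mem (Finset.mem_univ i), Finset.card_univ, Fintype.card_fin]
    rw [hcc] at hbu
    rw [hbu]
    simp only [id]
    rw [← Finset.sum_filter_add_sum_filter_not P (fun e => e.card = 1), ← hP1def, ← hP2def,
      e1, e2]
  have hAcard : A.card = 1 + P1.card := by
    rw [hAdef, Finset.card_insert_of_notMem hiP1, Finset.card_biUnion (t := id) hdisj1]
    simp only [id]
    rw [e1]
    omega
  have hAeven : Even A.card := by
    rcases hne with ⟨k, hk⟩
    have h0 : 0 < n := i.pos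
    exact ⟨(P1.card + 1) / 2, by omega⟩
  obtain ⟨Q, hQ2, hQss, hQuniq⟩ := pairUp A hAeven
  have hP2A : ∀ e ∈ P2, ∀ x ∈ e, x ∉ A := by
    intro e he x hxe hxA
    rcases (hmemA x).mp hxA with rfl | ⟨f, hf, hxf⟩
    · exact hnotin e (Finset.mem_of_mem_filter e he) hxe
    · have hxi : x ≠ i := fun h => hnotin f (Finset.mem_of_mem_filter f hf) (h ▸ hxf)
      have hef := uniq_blocks_eq (Finset.mem_of_mem_filter e he)
        (Finset.mem_of_mem_filter f hf) hxe hxf (huniq x hxi)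
      have h2 := hP2card e he
      have h1' := (Finset.mem_filter.mp hf).2
      rw [hef] at h2
      omega
  have hPQdisj : Disjoint P2 Q := by
    rw [Finset.disjoint_left]
    intro e heP2 heQ
    have h2 := hP2card e heP2
    obtain ⟨x, hx⟩ := Finset.card_pos.mp (show 0 < e.card by omega)
    exact hP2A e heP2 x hx (hQss e heQ hx)
  refine ⟨P2 ∪ Q, ⟨?_, ?_⟩, ?_⟩
  · intro e he
    rcases Finset.mem_union.mp he with he | he
    · exact hP2card e he
    · exact hQ2 e he
  · intro j
    by_cases hji : j = i
    · subst hji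
      obtain ⟨e, ⟨heQ, hje⟩, heuniq⟩ := hQuniq j (by rw [hmemA]; left; rfl)
      refine ⟨e, ⟨Finset.mem_union_right _ heQ, hje⟩, ?_⟩
      rintro f ⟨hf, hjf⟩
      rcases Finset.mem_union.mp hf with hf | hf
      · exact absurd hjf (hnotin f (Finset.mem_of_mem_filter f hf))
      · exact heuniq f ⟨hf, hjf⟩
    · obtain ⟨e, ⟨heP, hje⟩, hePuniq⟩ := huniq j hji
      rcases hcard e heP with hc1 | hc2
      · have heP1 : e ∈ P1 := Finset.mem_filter.mpr ⟨heP, hc1⟩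
        have hjA : j ∈ A := (hmemA j).mpr (Or.inr ⟨e, heP1, hje⟩)
        obtain ⟨f, ⟨hfQ, hjf⟩, hfuniq⟩ := hQuniq j hjA
        refine ⟨f, ⟨Finset.mem_union_right _ hfQ, hjf⟩, ?_⟩
        rintro g ⟨hg, hjg⟩
        rcases Finset.mem_union.mp hg with hg | hg
        · exact absurd hjA (hP2A g hg j hjg)
        · exact hfuniq g ⟨hg, hjg⟩
      · have heP2 : e ∈ P2 := Finset.mem_filter.mpr ⟨heP, by omega⟩
        refine ⟨e, ⟨Finset.mem_union_left _ heP2, hje⟩, ?_⟩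
        rintro g ⟨hg, hjg⟩
        rcases Finset.mem_union.mp hg with hg | hg
        · exact hePuniq g ⟨Finset.mem_of_mem_filter g hg, hjg⟩
        · exact absurd (hQss g hg hjg) (hP2A e heP2 j hje)
  · -- weight bound
    have hQbu : Q.biUnion id = A := by
      ext x
      simp only [Finset.mem_biUnion, id]
      constructor
      · rintro ⟨e, he, hxe⟩; exact hQss e he hxe
      · intro hx; obtain ⟨e, ⟨he, hxe⟩, -⟩ := hQuniq x hx; exact ⟨e, he, hxe⟩
    have hQdisj : (↑Q : Set (Finset (Fin n))).PairwiseDisjoint id := by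
      intro e he f hf hef
      simp only [Function.onFun, id]
      rw [Finset.disjoint_left]
      intro x hxe hxf
      exact hef (uniq_blocks_eq (Finset.mem_coe.mp he) (Finset.mem_coe.mp hf) hxe hxf
        (hQuniq x (hQss e (Finset.mem_coe.mp he) hxe)))
    have hdisjP1 : (↑P1 : Set (Finset (Fin n))).PairwiseDisjoint id :=
      hdisj.subset (Finset.coe_subset.mpr (Finset.filter_subset _ _))
    have step1 : ∑ e ∈ Q, blockWeight n D e ≤ ∑ e ∈ Q, ∑ a ∈ e, D i a := by
      apply Finset.sum_le_sum
      intro e he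
      obtain ⟨x, y, hxy, rfl⟩ := Finset.card_eq_two.mp (hQ2 e he)
      rw [blockWeight_pair D hzero hsym hxy, Finset.sum_pair hxy]
      calc D x y ≤ D x i + D i y := htri x y i
        _ = D i x + D i y := by rw [hsym x i]
    have step2 : ∑ e ∈ Q, ∑ a ∈ e, D i a = ∑ a ∈ A, D i a := by
      rw [← hQbu, Finset.sum_biUnion hQdisj]
      rfl
    have step3 : ∑ a ∈ A, D i a = ∑ e ∈ P1, ∑ a ∈ e, D i a := by
      rw [hAdef, Finset.sum_insert hiP1, hzero i, zero_add, Finset.sum_biUnion hdisjP1]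
      rfl
    rw [hsplit, pairingWeight, Finset.sum_union hPQdisj]
    linarith

end Part2
section Part1

variable (n : ℕ) (D : Fin n → Fin n → ℝ) (opp : Fin (2*(n-1)) → Fin n → Fin n)
  (loc : Fin (2*(n-1)) → Fin n → Bool) (i : Fin n)

/-- Location on day `d` (true = home), extended by `true` out of range. -/
def ttpL (d : ℕ) : Bool := if h : d < 2*(n-1) then loc ⟨d, h⟩ i else true

/-- Opponent on day `d`, extended by `i` out of range. -/
def ttpO (d : ℕ) : Fin n := if h : d < 2*(n-1) then opp ⟨d, h⟩ i else i

/-- The walk of team `i`: position before day 1 is home, then venues. -/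
def ttpW (d : ℕ) : Fin n := if d = 0 then i else ttpVen n opp loc (d-1) i

/-- Edge lengths of the walk. -/
noncomputable def ttpE (d : ℕ) : ℝ := D (ttpW n opp loc i d) (ttpW n opp loc i (d+1))

/-- Starting days of away runs. -/
def ttpS : Finset ℕ :=
  (Finset.range (2*(n-1))).filter
    (fun s => ttpL n loc i s = false ∧ (s = 0 ∨ ttpL n loc i (s-1) = true))

/-- The block of opponents visited in the away run starting at `s`. -/
def ttpBlk (s : ℕ) : Finset (Fin n) :=
  if ttpL n loc i (s+1) = false then {ttpO n opp i s, ttpO n opp i (s+1)} else {ttpO n opp i s}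

/-- The edge indices of the run starting at `s`. -/
def ttpI (s : ℕ) : Finset ℕ :=
  if ttpL n loc i (s+1) = false then {s, s+1, s+2} else {s, s+1}

lemma ttpL_lt {d : ℕ} (h : ttpL n loc i d = false) : d < 2*(n-1) := by
  by_contra hc
  rw [ttpL, dif_neg hc] at h
  simp at h

lemma ttpL_eq {d : ℕ} (h : d < 2*(n-1)) : ttpL n loc i d = loc ⟨d, h⟩ i := dif_pos h

lemma ttpO_eq {d : ℕ} (h : d < 2*(n-1)) : ttpO n opp i d = opp ⟨d, h⟩ i := dif_pos h

lemma ttpVen_eq (d : ℕ) :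
    ttpVen n opp loc d i = if ttpL n loc i d then i else ttpO n opp i d := by
  by_cases h : d < 2*(n-1)
  · rw [ttpVen, dif_pos h, ttpL_eq n loc i h, ttpO_eq n opp i h]
  · rw [ttpVen, dif_neg h, ttpL, dif_neg h, if_pos rfl]

end Part1
section Part1b

variable (n : ℕ) (opp : Fin (2*(n-1)) → Fin n → Fin n)
  (loc : Fin (2*(n-1)) → Fin n → Bool) (i : Fin n)

lemma ttpO_ne (hfeas : ttpFeasible n opp loc) {d : ℕ} (h : d < 2*(n-1)) :
    ttpO n opp i d ≠ i := by
  rw [ttpO_eq n opp i h]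
  exact hfeas.1 _ i

lemma ttp_norep (hfeas : ttpFeasible n opp loc) {d : ℕ} (h : d + 1 < 2*(n-1)) :
    ttpO n opp i (d+1) ≠ ttpO n opp i d := by
  rw [ttpO_eq n opp i h, ttpO_eq n opp i (by omega)]
  exact hfeas.2.2.2.2.1 d h i

lemma ttpL3 (hfeas : ttpFeasible n opp loc) {d : ℕ} (h0 : ttpL n loc i d = false)
    (h1 : ttpL n loc i (d+1) = false) : ttpL n loc i (d+2) = true := by
  have hd1 : d + 1 < 2*(n-1) := ttpL_lt n loc i h1
  by_cases h2 : d + 2 < 2*(n-1)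
  · by_contra hc
    have hc' : ttpL n loc i (d+2) = false := by
      cases hx : ttpL n loc i (d+2)
      · rfl
      · exact absurd hx hc
    refine hfeas.2.2.2.2.2 d h2 i ⟨?_, ?_⟩
    · rw [← ttpL_eq n loc i (by omega : d + 1 < 2*(n-1)),
        ← ttpL_eq n loc i (by omega : d < 2*(n-1)), h1, h0]
    · rw [← ttpL_eq n loc i h2, ← ttpL_eq n loc i (by omega : d + 1 < 2*(n-1)), hc', h1]
  · rw [ttpL, dif_neg h2]

lemma ttp_away_inj (hfeas : ttpFeasible n opp loc) {d d' : ℕ}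
    (hd : ttpL n loc i d = false) (hd' : ttpL n loc i d' = false)
    (hOO : ttpO n opp i d = ttpO n opp i d') : d = d' := by
  have hdlt := ttpL_lt n loc i hd
  have hdlt' := ttpL_lt n loc i hd'
  have hne : ttpO n opp i d ≠ i := ttpO_ne n opp loc i hfeas hdlt
  obtain ⟨day, -, huq⟩ := hfeas.2.2.2.1 i (ttpO n opp i d) (Ne.symm hne)
  have e1 : (⟨d, hdlt⟩ : Fin (2*(n-1))) = day :=
    huq _ ⟨(ttpO_eq n opp i hdlt).symm, by rw [← ttpL_eq n loc i hdlt]; exact hd⟩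
  have e2 : (⟨d', hdlt'⟩ : Fin (2*(n-1))) = day :=
    huq _ ⟨by rw [← ttpO_eq n opp i hdlt']; exact hOO.symm,
      by rw [← ttpL_eq n loc i hdlt']; exact hd'⟩
  have := e1.trans e2.symm
  exact congrArg Fin.val this

lemma ttp_cover (hfeas : ttpFeasible n opp loc) {j : Fin n} (hj : j ≠ i) :
    ∃ d, ttpL n loc i d = false ∧ ttpO n opp i d = j := by
  obtain ⟨day, ⟨h1, h2⟩, -⟩ := hfeas.2.2.2.1 i j (Ne.symm hj)
  refine ⟨day.1, ?_, ?_⟩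
  · rw [ttpL_eq n loc i day.2, Fin.eta]
    exact h2
  · rw [ttpO_eq n opp i day.2, Fin.eta]
    exact h1

lemma mem_ttpS {s : ℕ} : s ∈ ttpS n loc i ↔
    ttpL n loc i s = false ∧ (s = 0 ∨ ttpL n loc i (s-1) = true) := by
  rw [ttpS, Finset.mem_filter, Finset.mem_range]
  constructor
  · rintro ⟨-, h⟩; exact h
  · intro h; exact ⟨ttpL_lt n loc i h.1, h⟩

lemma ttp_run (hfeas : ttpFeasible n opp loc) {d : ℕ} (hd : ttpL n loc i d = false) :
    d ∈ ttpS n loc i ∨ (1 ≤ d ∧ ttpL n loc i (d-1) = false ∧ d - 1 ∈ ttpS n loc i) := by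
  rcases Nat.eq_zero_or_pos d with rfl | hpos
  · exact Or.inl ((mem_ttpS n loc i).mpr ⟨hd, Or.inl rfl⟩)
  · rcases Bool.eq_false_or_eq_true (ttpL n loc i (d-1)) with hprev | hprev
    · exact Or.inl ((mem_ttpS n loc i).mpr ⟨hd, Or.inr hprev⟩)
    · refine Or.inr ⟨hpos, hprev, (mem_ttpS n loc i).mpr ⟨hprev, ?_⟩⟩
      rcases Nat.eq_zero_or_pos (d-1) with h1 | h1
      · exact Or.inl h1
      · refine Or.inr ?_
        rcases Bool.eq_false_or_eq_true (ttpL n loc i (d-1-1)) with hpp | hpp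
        · exact hpp
        · exfalso
          have e1 : d - 1 - 1 + 1 = d - 1 := by omega
          have e2 : d - 1 - 1 + 2 = d := by omega
          have := ttpL3 n opp loc i hfeas hpp (by rw [e1]; exact hprev)
          rw [e2, hd] at this
          simp at this

lemma mem_ttpBlk {s : ℕ} {j : Fin n} : j ∈ ttpBlk n opp loc i s ↔
    (j = ttpO n opp i s ∨ (ttpL n loc i (s+1) = false ∧ j = ttpO n opp i (s+1))) := by
  rw [ttpBlk]
  split_ifs with h
  · simp [h]
  · simp [h]

lemma ttpBlk_elem (hfeas : ttpFeasible n opp loc) {s : ℕ} {j : Fin n}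
    (hs : s ∈ ttpS n loc i) (hj : j ∈ ttpBlk n opp loc i s) :
    ∃ t, (t = s ∨ t = s + 1) ∧ ttpL n loc i t = false ∧ ttpO n opp i t = j := by
  have hL := ((mem_ttpS n loc i).mp hs).1
  rcases (mem_ttpBlk n opp loc i).mp hj with rfl | ⟨hL1, rfl⟩
  · exact ⟨s, Or.inl rfl, hL, rfl⟩
  · exact ⟨s+1, Or.inr rfl, hL1, rfl⟩

lemma ttpS_uniq (hfeas : ttpFeasible n opp loc) {s s' : ℕ} {j : Fin n}
    (hs : s ∈ ttpS n loc i) (hs' : s' ∈ ttpS n loc i)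
    (hj : j ∈ ttpBlk n opp loc i s) (hj' : j ∈ ttpBlk n opp loc i s') : s = s' := by
  obtain ⟨t, ht, htL, htO⟩ := ttpBlk_elem n opp loc i hfeas hs hj
  obtain ⟨t', ht', htL', htO'⟩ := ttpBlk_elem n opp loc i hfeas hs' hj'
  have htt : t = t' := ttp_away_inj n opp loc i hfeas htL htL' (htO.trans htO'.symm)
  subst htt
  have hLs := ((mem_ttpS n loc i).mp hs).1
  have hLs' := ((mem_ttpS n loc i).mp hs').1
  have key : ∀ a b : ℕ, a ∈ ttpS n loc i → ttpL n loc i b = false → a = b + 1 → False := by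
    intro a b ha hb hab
    rcases ((mem_ttpS n loc i).mp ha).2 with h0 | hT
    · omega
    · rw [hab] at hT
      simp only [Nat.add_sub_cancel] at hT
      rw [hb] at hT
      simp at hT
  rcases ht with h1 | h1 <;> rcases ht' with h2 | h2
  · omega
  · exact (key s s' hs hLs' (by omega)).elim
  · exact (key s' s hs' hLs (by omega)).elim
  · omega

end Part1b
section Part1c

variable (n : ℕ) (D : Fin n → Fin n → ℝ) (opp : Fin (2*(n-1)) → Fin n → Fin n)
  (loc : Fin (2*(n-1)) → Fin n → Bool) (i : Fin n)

lemma ttpW_zero : ttpW n opp loc i 0 = i := by rw [ttpW, if_pos rfl]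

lemma ttpW_succ (d : ℕ) : ttpW n opp loc i (d+1) = ttpVen n opp loc d i := by
  rw [ttpW, if_neg (Nat.succ_ne_zero d)]
  simp

lemma ttpW_home {d : ℕ} (h : ttpL n loc i d = true) : ttpW n opp loc i (d+1) = i := by
  rw [ttpW_succ, ttpVen_eq, h, if_pos rfl]

lemma ttpW_away {d : ℕ} (h : ttpL n loc i d = false) :
    ttpW n opp loc i (d+1) = ttpO n opp i d := by
  rw [ttpW_succ, ttpVen_eq, h]
  simp

lemma ttp_travel_eq (hn : 4 ≤ n) :
    ttpTravel n D opp loc i = ∑ d ∈ Finset.range (2*(n-1)+1), ttpE n D opp loc i d := by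
  obtain ⟨m, hm⟩ : ∃ m, 2*(n-1) = m + 1 := ⟨2*(n-1)-1, by omega⟩
  rw [ttpTravel, hm]
  simp only [Nat.add_sub_cancel]
  rw [show m + 1 + 1 = m + 2 from rfl,
    Finset.sum_range_succ' (fun d => ttpE n D opp loc i d) (m+1),
    Finset.sum_range_succ]
  have e0 : ttpE n D opp loc i 0 = D i (ttpVen n opp loc 0 i) := by
    rw [ttpE, ttpW_zero, ttpW_succ]
  have es : ∀ d, ttpE n D opp loc i (d+1)
      = D (ttpVen n opp loc d i) (ttpVen n opp loc (d+1) i) := by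
    intro d
    rw [ttpE, ttpW_succ, ttpW_succ]
  have hv1 : ttpVen n opp loc (m+1) i = i := by
    rw [ttpVen, dif_neg (by omega : ¬ m + 1 < 2*(n-1))]
  have elast : ttpE n D opp loc i (m+1) = D (ttpVen n opp loc m i) i := by
    rw [ttpE, ttpW_succ, ttpW_succ, hv1]
  rw [e0, elast, Finset.sum_congr rfl (fun d _ => es d)]
  ring

lemma mem_ttpI_bounds {s d : ℕ} (hd : d ∈ ttpI n loc i s) :
    s ≤ d ∧ d ≤ s + (if ttpL n loc i (s+1) = false then 2 else 1) := by
  rw [ttpI] at hd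
  split_ifs at hd with h <;> split_ifs with h' <;> simp only [Finset.mem_insert,
    Finset.mem_singleton] at hd <;> first
    | (exact absurd h h') | (exact absurd h' h) | omega

lemma ttpI_subset {s : ℕ} (hs : s ∈ ttpS n loc i) :
    ttpI n loc i s ⊆ Finset.range (2*(n-1)+1) := by
  intro d hd
  have hb := mem_ttpI_bounds n loc i hd
  have hsT : s < 2*(n-1) := ttpL_lt n loc i ((mem_ttpS n loc i).mp hs).1
  rw [Finset.mem_range]
  split_ifs at hb with h
  · have : s + 1 < 2*(n-1) := ttpL_lt n loc i h
    omega
  · omega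

lemma ttpS_sep {s s' : ℕ} (hs : s ∈ ttpS n loc i) (hs' : s' ∈ ttpS n loc i)
    (hlt : s < s') : s + (if ttpL n loc i (s+1) = false then 2 else 1) + 1 ≤ s' := by
  have hLs := ((mem_ttpS n loc i).mp hs).1
  rcases ((mem_ttpS n loc i).mp hs').2 with h0 | hT
  · omega
  · split_ifs with hpair
    · by_contra hc
      have he : s' - 1 = s ∨ s' - 1 = s + 1 := by omega
      rcases he with e | e <;> rw [e] at hT
      · rw [hLs] at hT; simp at hT
      · rw [hpair] at hT; simp at hT
    · by_contra hc
      have he : s' - 1 = s := by omega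
      rw [he, hLs] at hT
      simp at hT

lemma ttpI_disj : (↑(ttpS n loc i) : Set ℕ).PairwiseDisjoint (ttpI n loc i) := by
  intro s hs s' hs' hne
  simp only [Function.onFun]
  rw [Finset.disjoint_left]
  intro d hd hd'
  have h1 := mem_ttpI_bounds n loc i hd
  have h2 := mem_ttpI_bounds n loc i hd'
  rcases lt_or_gt_of_ne hne with hlt | hlt
  · have := ttpS_sep n loc i (Finset.mem_coe.mp hs) (Finset.mem_coe.mp hs') hlt
    omega
  · have := ttpS_sep n loc i (Finset.mem_coe.mp hs') (Finset.mem_coe.mp hs) hlt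
    omega

end Part1c
section Part1d

variable (n : ℕ) (D : Fin n → Fin n → ℝ) (opp : Fin (2*(n-1)) → Fin n → Fin n)
  (loc : Fin (2*(n-1)) → Fin n → Bool) (i : Fin n)

lemma ttp_isPattern (hfeas : ttpFeasible n opp loc) :
    isPattern n i ((ttpS n loc i).image (ttpBlk n opp loc i)) := by
  refine ⟨?_, ?_, ?_⟩
  · intro e he
    obtain ⟨s, hs, rfl⟩ := Finset.mem_image.mp he
    rw [ttpBlk]
    split_ifs with h
    · right
      exact Finset.card_pair (Ne.symm (ttp_norep n opp loc i hfeas (ttpL_lt n loc i h)))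
    · left
      exact Finset.card_singleton _
  · intro e he hie
    obtain ⟨s, hs, rfl⟩ := Finset.mem_image.mp he
    have hLs := ((mem_ttpS n loc i).mp hs).1
    rcases (mem_ttpBlk n opp loc i).mp hie with h | ⟨h1, h⟩
    · exact ttpO_ne n opp loc i hfeas (ttpL_lt n loc i hLs) h.symm
    · exact ttpO_ne n opp loc i hfeas (ttpL_lt n loc i h1) h.symm
  · intro j hj
    obtain ⟨d, hLd, hOd⟩ := ttp_cover n opp loc i hfeas hj
    have hex : ∃ s ∈ ttpS n loc i, j ∈ ttpBlk n opp loc i s := by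
      rcases ttp_run n opp loc i hfeas hLd with hS | ⟨hd1, hprev, hS⟩
      · exact ⟨d, hS, (mem_ttpBlk n opp loc i).mpr (Or.inl hOd.symm)⟩
      · refine ⟨d - 1, hS, (mem_ttpBlk n opp loc i).mpr (Or.inr ⟨?_, ?_⟩)⟩
        · rw [show d - 1 + 1 = d by omega]
          exact hLd
        · rw [show d - 1 + 1 = d by omega]
          exact hOd.symm
    obtain ⟨s, hs, hjs⟩ := hex
    refine ⟨ttpBlk n opp loc i s, ⟨Finset.mem_image_of_mem _ hs, hjs⟩, ?_⟩
    rintro f ⟨hf, hjf⟩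
    obtain ⟨s', hs', rfl⟩ := Finset.mem_image.mp hf
    exact congrArg _ (ttpS_uniq n opp loc i hfeas hs' hs hjf hjs)

lemma ttp_run_cost (hfeas : ttpFeasible n opp loc) (hD : isMetric n D) {s : ℕ}
    (hs : s ∈ ttpS n loc i) :
    (∑ a ∈ ttpBlk n opp loc i s, D i a) +
      (if (ttpBlk n opp loc i s).card = 1 then ∑ a ∈ ttpBlk n opp loc i s, D i a
        else blockWeight n D (ttpBlk n opp loc i s))
      = ∑ d ∈ ttpI n loc i s, ttpE n D opp loc i d := by
  obtain ⟨hzero, hnonneg, hsym, htri⟩ := hD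
  obtain ⟨hLs, hstart⟩ := (mem_ttpS n loc i).mp hs
  have hws : ttpW n opp loc i s = i := by
    rcases hstart with rfl | hprev
    · exact ttpW_zero n opp loc i
    · rcases Nat.eq_zero_or_pos s with rfl | hp
      · exact ttpW_zero n opp loc i
      · rw [show s = s - 1 + 1 by omega]
        exact ttpW_home n opp loc i hprev
  rcases Bool.eq_false_or_eq_true (ttpL n loc i (s+1)) with hsing | hpair
  · -- run of length 1
    have hpair' : ¬ ttpL n loc i (s+1) = false := by rw [hsing]; simp
    rw [ttpBlk, if_neg hpair', ttpI, if_neg hpair']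
    rw [if_pos (Finset.card_singleton _), Finset.sum_singleton]
    rw [show ({s, s+1} : Finset ℕ) = insert s {s+1} from rfl,
      Finset.sum_insert (by simp), Finset.sum_singleton]
    have e1 : ttpE n D opp loc i s = D i (ttpO n opp i s) := by
      rw [ttpE, hws, ttpW_away n opp loc i hLs]
    have e2 : ttpE n D opp loc i (s+1) = D (ttpO n opp i s) i := by
      rw [ttpE, ttpW_away n opp loc i hLs, ttpW_home n opp loc i hsing]
    rw [e1, e2, hsym (ttpO n opp i s) i]

  · -- run of length 2
    have hab : ttpO n opp i s ≠ ttpO n opp i (s+1) :=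
      Ne.symm (ttp_norep n opp loc i hfeas (ttpL_lt n loc i hpair))
    rw [ttpBlk, if_pos hpair, ttpI, if_pos hpair]
    have hcard : ({ttpO n opp i s, ttpO n opp i (s+1)} : Finset (Fin n)).card = 2 :=
      Finset.card_pair hab
    rw [if_neg (by omega : ¬ ({ttpO n opp i s, ttpO n opp i (s+1)} : Finset (Fin n)).card = 1)]
    rw [Finset.sum_pair hab, blockWeight_pair D hzero hsym hab]
    have hd1 : ({s+1, s+2} : Finset ℕ) = insert (s+1) {s+2} := rfl
    rw [show ({s, s+1, s+2} : Finset ℕ) = insert s {s+1, s+2} from rfl,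
      Finset.sum_insert (by simp only [Finset.mem_insert, Finset.mem_singleton]; omega), Finset.sum_insert (by simp), Finset.sum_singleton]
    have e1 : ttpE n D opp loc i s = D i (ttpO n opp i s) := by
      rw [ttpE, hws, ttpW_away n opp loc i hLs]
    have e2 : ttpE n D opp loc i (s+1) = D (ttpO n opp i s) (ttpO n opp i (s+1)) := by
      rw [ttpE, ttpW_away n opp loc i hLs, ttpW_away n opp loc i hpair]
    have e3 : ttpE n D opp loc i (s+2) = D (ttpO n opp i (s+1)) i := by
      rw [ttpE, ttpW_away n opp loc i hpair,
        show s + 2 + 1 = (s + 2) + 1 from rfl,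
        ttpW_home n opp loc i (ttpL3 n opp loc i hfeas hLs hpair)]
    rw [e1, e2, e3, hsym (ttpO n opp i (s+1)) i]
    ring
lemma ttp_travel_ge (hn : 4 ≤ n) (hD : isMetric n D) (hfeas : ttpFeasible n opp loc) :
    patternCost n D i ((ttpS n loc i).image (ttpBlk n opp loc i))
      ≤ ttpTravel n D opp loc i := by
  have hinj : ∀ s ∈ ttpS n loc i, ∀ s' ∈ ttpS n loc i,
      ttpBlk n opp loc i s = ttpBlk n opp loc i s' → s = s' := by
    intro s hs s' hs' hss
    have hOs : ttpO n opp i s ∈ ttpBlk n opp loc i s :=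
      (mem_ttpBlk n opp loc i).mpr (Or.inl rfl)
    exact ttpS_uniq n opp loc i hfeas hs hs' hOs (hss ▸ hOs)
  rw [patternCost, Finset.sum_image hinj, ttp_travel_eq n D opp loc i hn]
  calc ∑ s ∈ ttpS n loc i, ((∑ a ∈ ttpBlk n opp loc i s, D i a) +
        (if (ttpBlk n opp loc i s).card = 1 then ∑ a ∈ ttpBlk n opp loc i s, D i a
          else blockWeight n D (ttpBlk n opp loc i s)))
      = ∑ s ∈ ttpS n loc i, ∑ d ∈ ttpI n loc i s, ttpE n D opp loc i d :=
        Finset.sum_congr rfl (fun s hs => ttp_run_cost n D opp loc i hfeas hD hs)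
    _ = ∑ d ∈ (ttpS n loc i).biUnion (ttpI n loc i), ttpE n D opp loc i d :=
        (Finset.sum_biUnion (ttpI_disj n loc i)).symm
    _ ≤ ∑ d ∈ Finset.range (2*(n-1)+1), ttpE n D opp loc i d := by
        apply Finset.sum_le_sum_of_subset_of_nonneg
        · exact Finset.biUnion_subset.mpr (fun s hs => ttpI_subset n loc i hs)
        · intro d _ _
          exact hD.2.1 _ _

end Part1d
/-- The independent lower bound: the total distance of any feasible TTP-2
schedule is at least `LB = 2 * D_G + n * D_M`. -/
theorem total_ge_independent_lower_bound (n : ℕ) (hn : 4 ≤ n) (hne : Even n)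
    (D : Fin n → Fin n → ℝ) (hD : isMetric n D)
    (M : Finset (Finset (Fin n))) (hM : isPairing n M)
    (hMmin : ∀ M' : Finset (Finset (Fin n)), isPairing n M' →
      pairingWeight n D M ≤ pairingWeight n D M')
    (opp : Fin (2*(n-1)) → Fin n → Fin n) (loc : Fin (2*(n-1)) → Fin n → Bool)
    (hfeas : ttpFeasible n opp loc) :
    2 * sumDG n D + (n : ℝ) * pairingWeight n D M ≤ ttpTotal n D opp loc := by
  have hstep : ∀ i : Fin n, sumDi n D i + pairingWeight n D M ≤ ttpTravel n D opp loc i := by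
    intro i
    obtain ⟨M', hM'pair, hle⟩ :=
      exists_pairing_le n hne D hD i _ (ttp_isPattern n opp loc i hfeas)
    have h1 := hMmin M' hM'pair
    have h2 := ttp_travel_ge n D opp loc i hn hD hfeas
    linarith
  have hDG : 2 * sumDG n D = ∑ i : Fin n, sumDi n D i := by
    simp only [sumDG, sumDi]
    ring
  have hconst : (n : ℝ) * pairingWeight n D M = ∑ _i : Fin n, pairingWeight n D M := by
    rw [Finset.sum_const, Finset.card_univ, Fintype.card_fin, nsmul_eq_mul]
  calc 2 * sumDG n D + (n:ℝ) * pairingWeight n D M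
      = ∑ i : Fin n, (sumDi n D i + pairingWeight n D M) := by
        rw [Finset.sum_add_distrib, ← hDG, ← hconst]
    _ ≤ ∑ i : Fin n, ttpTravel n D opp loc i := Finset.sum_le_sum (fun i _ => hstep i)
    _ = ttpTotal n D opp loc := rfl
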